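/- In the group G_2 = ⟨x, y | x y^{-1} x^{-1} y x = y^{-2} x y x^{-1} y^{-1} x y^2⟩, the relation holds modulo γ_4(G_2) in the form [y,x]^4 = [[x,y],y]^2. Equivalently, the image of the relator in G_2/γ_4(G_2) equals the identity iff [y,x]^4 [[x,y],y]^{-2} = 1 there. -/

import Mathlib

/- STATEMENT 4: In `G₂ = ⟨x, y | x y⁻¹ x⁻¹ y x = y⁻² x y x⁻¹ y⁻¹ x y²⟩`, modulo
   `γ₄(G₂) = lowerCentralSeries G₂ 3` the relation takes the form
   `[y,x]⁴ = [[x,y],y]²`, with `[a,b] = a⁻¹b⁻¹ab`. -/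

namespace Stmt4

abbrev F := FreeGroup (Fin 2)

def x : F := FreeGroup.of 0
def y : F := FreeGroup.of 1

def R : F :=
  x * y⁻¹ * x⁻¹ * y * x * (y⁻¹ * y⁻¹ * x * y * x⁻¹ * y⁻¹ * x * y * y)⁻¹

abbrev G2 := PresentedGroup ({R} : Set F)

def xg : G2 := PresentedGroup.of 0
def yg : G2 := PresentedGroup.of 1

def comm (a b : G2) : G2 := a⁻¹ * b⁻¹ * a * b

/-- The quotient `G₂ / γ₄(G₂)`. -/
abbrev Q := G2 ⧸ Subgroup.lowerCentralSeries (⊤ : Subgroup G2) 3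

def π : G2 →* Q := QuotientGroup.mk' _

/-- For a surjective hom, the lower central series of the target is contained in the image. -/
lemma lcs_le_map {G H : Type*} [Group G] [Group H] (f : G →* H)
    (hf : Function.Surjective f) (n : ℕ) :
    Subgroup.lowerCentralSeries (⊤ : Subgroup H) n ≤ Subgroup.map f (Subgroup.lowerCentralSeries (⊤ : Subgroup G) n) := by
  induction n with
  | zero =>
      rw [Subgroup.lowerCentralSeries_zero, Subgroup.lowerCentralSeries_zero,
        Subgroup.map_top_of_surjective f hf]
  | succ n ih =>
      show ⁅Subgroup.lowerCentralSeries (⊤ : Subgroup H) n, (⊤ : Subgroup H)⁆ ≤ _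
      have h2 : Subgroup.map f ⁅Subgroup.lowerCentralSeries (⊤ : Subgroup G) n, (⊤ : Subgroup G)⁆
          = ⁅Subgroup.map f (Subgroup.lowerCentralSeries (⊤ : Subgroup G) n), Subgroup.map f ⊤⁆ :=
        Subgroup.map_commutator _ _ f
      rw [show (Subgroup.lowerCentralSeries (⊤ : Subgroup G) (n+1)) = ⁅Subgroup.lowerCentralSeries (⊤ : Subgroup G) n, (⊤ : Subgroup G)⁆ from rfl,
        h2, Subgroup.map_top_of_surjective f hf]
      exact Subgroup.commutator_mono ih le_rfl

/-- Key abstract computation in a group of nilpotency class ≤ 3. -/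
lemma key {G : Type*} [Group G] (a b c d e : G)
    (hc : c = a⁻¹ * b⁻¹ * a * b) (hd : d = c⁻¹ * a⁻¹ * c * a) (he : e = c⁻¹ * b⁻¹ * c * b)
    (hdz : ∀ z, d * z = z * d) (hez : ∀ z, e * z = z * e)
    (hrel : a * b⁻¹ * a⁻¹ * b * a = b⁻¹ * b⁻¹ * a * b * a⁻¹ * b⁻¹ * a * b * b) :
    c⁻¹ * c⁻¹ * c⁻¹ * c⁻¹ = e * e := by
  have hdz' : ∀ z, d⁻¹ * z = z * d⁻¹ := by
    intro z
    calc d⁻¹ * z = d⁻¹ * (z * d) * d⁻¹ := by group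
    _ = d⁻¹ * (d * z) * d⁻¹ := by rw [hdz z]
    _ = z * d⁻¹ := by group
  have hez' : ∀ z, e⁻¹ * z = z * e⁻¹ := by
    intro z
    calc e⁻¹ * z = e⁻¹ * (z * e) * e⁻¹ := by group
    _ = e⁻¹ * (e * z) * e⁻¹ := by rw [hez z]
    _ = z * e⁻¹ := by group
  have f1 : b⁻¹ * a * b = a * c := by rw [hc]; group
  have f2 : b⁻¹ * c * b = c * e := by rw [he]; group
  have f3 : c * a = a * c * d := by rw [hd]; group
  have f3' : a * c = c * a * d⁻¹ := by rw [f3]; group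
  have f4 : c * b = b * (c * e) := by rw [he]; group
  have f5 : a * c * a⁻¹ = c * d⁻¹ := by
    calc a * c * a⁻¹ = (c * a * d⁻¹) * a⁻¹ := by rw [← f3']
    _ = c * a * (d⁻¹ * a⁻¹) := by group
    _ = c * a * (a⁻¹ * d⁻¹) := by rw [hdz' a⁻¹]
    _ = c * d⁻¹ := by group
  have f5' : c * a⁻¹ = a⁻¹ * (c * d⁻¹) := by rw [← f5]; group
  have f4' : b * c = c * b * e⁻¹ := by rw [f4]; group
  have f6 : b * c * b⁻¹ = c * e⁻¹ := by
    calc b * c * b⁻¹ = (c * b * e⁻¹) * b⁻¹ := by rw [← f4']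
    _ = c * b * (e⁻¹ * b⁻¹) := by group
    _ = c * b * (b⁻¹ * e⁻¹) := by rw [hez' b⁻¹]
    _ = c * e⁻¹ := by group
  have fab : a * b = b * a * c := by rw [hc]; group
  have f7 : a * b * a⁻¹ * b⁻¹ = c * e⁻¹ * d⁻¹ := by
    calc a * b * a⁻¹ * b⁻¹ = (a * b) * a⁻¹ * b⁻¹ := by group
    _ = (b * a * c) * a⁻¹ * b⁻¹ := by rw [fab]
    _ = b * a * (c * a⁻¹) * b⁻¹ := by group
    _ = b * a * (a⁻¹ * (c * d⁻¹)) * b⁻¹ := by rw [f5']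
    _ = b * c * (d⁻¹ * b⁻¹) := by group
    _ = b * c * (b⁻¹ * d⁻¹) := by rw [hdz' b⁻¹]
    _ = (b * c * b⁻¹) * d⁻¹ := by group
    _ = (c * e⁻¹) * d⁻¹ := by rw [f6]
    _ = c * e⁻¹ * d⁻¹ := by group
  -- conjugate of a by b²
  have hA : b⁻¹ * (b⁻¹ * a * b) * b = a * c * (c * e) := by
    calc b⁻¹ * (b⁻¹ * a * b) * b = b⁻¹ * (a * c) * b := by rw [f1]
    _ = (b⁻¹ * a * b) * (b⁻¹ * c * b) := by group
    _ = (a * c) * (c * e) := by rw [f1, f2]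
    _ = a * c * (c * e) := by group
  have ha : a = b * b * (a * c * (c * e)) * b⁻¹ * b⁻¹ := by rw [← hA]; group
  -- rewrite the right-hand side of the relation
  have hR : b⁻¹ * b⁻¹ * a * b * a⁻¹ * b⁻¹ * a * b * b
      = (a * c * (c * e)) * b * (a * c * (c * e))⁻¹ * b⁻¹ * (a * c * (c * e)) := by
    conv_lhs => rw [ha]
    group
  have hAb : (a * c * (c * e)) * b * (a * c * (c * e))⁻¹ * b⁻¹ = c * (e * d⁻¹) := by
    calc (a * c * (c * e)) * b * (a * c * (c * e))⁻¹ * b⁻¹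
        = a * c * c * (e * b) * e⁻¹ * c⁻¹ * c⁻¹ * a⁻¹ * b⁻¹ := by group
    _ = a * c * c * (b * e) * e⁻¹ * c⁻¹ * c⁻¹ * a⁻¹ * b⁻¹ := by rw [hez b]
    _ = a * c * (c * b) * c⁻¹ * c⁻¹ * a⁻¹ * b⁻¹ := by group
    _ = a * c * (b * (c * e)) * c⁻¹ * c⁻¹ * a⁻¹ * b⁻¹ := by rw [f4]
    _ = a * c * b * c * (e * c⁻¹) * c⁻¹ * a⁻¹ * b⁻¹ := by group
    _ = a * c * b * c * (c⁻¹ * e) * c⁻¹ * a⁻¹ * b⁻¹ := by rw [hez c⁻¹]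
    _ = a * c * b * (e * c⁻¹) * a⁻¹ * b⁻¹ := by group
    _ = a * c * b * (c⁻¹ * e) * a⁻¹ * b⁻¹ := by rw [hez c⁻¹]
    _ = a * c * b * c⁻¹ * (e * a⁻¹) * b⁻¹ := by group
    _ = a * c * b * c⁻¹ * (a⁻¹ * e) * b⁻¹ := by rw [hez a⁻¹]
    _ = a * c * b * c⁻¹ * a⁻¹ * (e * b⁻¹) := by group
    _ = a * c * b * c⁻¹ * a⁻¹ * (b⁻¹ * e) := by rw [hez b⁻¹]
    _ = a * (c * b) * c⁻¹ * a⁻¹ * b⁻¹ * e := by group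
    _ = a * (b * (c * e)) * c⁻¹ * a⁻¹ * b⁻¹ * e := by rw [f4]
    _ = a * b * c * (e * c⁻¹) * a⁻¹ * b⁻¹ * e := by group
    _ = a * b * c * (c⁻¹ * e) * a⁻¹ * b⁻¹ * e := by rw [hez c⁻¹]
    _ = a * b * (e * a⁻¹) * b⁻¹ * e := by group
    _ = a * b * (a⁻¹ * e) * b⁻¹ * e := by rw [hez a⁻¹]
    _ = a * b * a⁻¹ * (e * b⁻¹) * e := by group
    _ = a * b * a⁻¹ * (b⁻¹ * e) * e := by rw [hez b⁻¹]
    _ = (a * b * a⁻¹ * b⁻¹) * e * e := by group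
    _ = (c * e⁻¹ * d⁻¹) * e * e := by rw [f7]
    _ = c * e⁻¹ * (d⁻¹ * e) * e := by group
    _ = c * e⁻¹ * (e * d⁻¹) * e := by rw [hdz' e]
    _ = c * (d⁻¹ * e) := by group
    _ = c * (e * d⁻¹) := by rw [hdz' e]
  -- now normalize the right-hand side completely
  have hRR : b⁻¹ * b⁻¹ * a * b * a⁻¹ * b⁻¹ * a * b * b = a * (c * (c * (c * (e * e)))) := by
    calc b⁻¹ * b⁻¹ * a * b * a⁻¹ * b⁻¹ * a * b * b
        = ((a * c * (c * e)) * b * (a * c * (c * e))⁻¹ * b⁻¹) * (a * c * (c * e)) := by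
          rw [hR]
    _ = (c * (e * d⁻¹)) * (a * c * (c * e)) := by rw [hAb]
    _ = c * e * (d⁻¹ * a) * c * c * e := by group
    _ = c * e * (a * d⁻¹) * c * c * e := by rw [hdz' a]
    _ = c * (e * a) * (d⁻¹ * c) * c * e := by group
    _ = c * (a * e) * (c * d⁻¹) * c * e := by rw [hez a, hdz' c]
    _ = (c * a) * (e * c) * (d⁻¹ * c) * e := by group
    _ = (a * c * d) * (c * e) * (c * d⁻¹) * e := by rw [f3, hez c, hdz' c]
    _ = a * c * (d * c) * (e * c) * (d⁻¹ * e) := by group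
    _ = a * c * (c * d) * (c * e) * (e * d⁻¹) := by
          rw [hdz c, hez c, hdz' e]
    _ = a * c * c * (d * c) * e * e * d⁻¹ := by group
    _ = a * c * c * (c * d) * e * e * d⁻¹ := by rw [hdz c]
    _ = a * c * c * c * ((d * e) * e * d⁻¹) := by group
    _ = a * c * c * c * ((e * d) * e * d⁻¹) := by rw [hdz e]
    _ = a * c * c * c * (e * (d * e) * d⁻¹) := by group
    _ = a * c * c * c * (e * (e * d) * d⁻¹) := by rw [hdz e]
    _ = a * (c * (c * (c * (e * e)))) := by group
  have h2 : c⁻¹ = c * (c * (c * (e * e))) := by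
    have hL : a * c⁻¹ = a * (c * (c * (c * (e * e)))) := by
      calc a * c⁻¹ = a * b⁻¹ * a⁻¹ * b * a := by rw [hc]; group
      _ = b⁻¹ * b⁻¹ * a * b * a⁻¹ * b⁻¹ * a * b * b := hrel
      _ = a * (c * (c * (c * (e * e)))) := hRR
    exact mul_left_cancel hL
  calc c⁻¹ * c⁻¹ * c⁻¹ * c⁻¹ = c⁻¹ * c⁻¹ * c⁻¹ * (c * (c * (c * (e * e)))) := by rw [← h2]
  _ = e * e := by group

theorem relation_mod_gamma4 :
    π (comm yg xg) ^ 4 = π (comm (comm xg yg) yg) ^ 2 := by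
  letI : Bracket Q Q := commutatorElement
  -- γ₄ of the quotient is trivial
  have hbot : Subgroup.lowerCentralSeries (⊤ : Subgroup Q) 3 = ⊥ := by
    have hmap : Subgroup.map π (Subgroup.lowerCentralSeries (⊤ : Subgroup G2) 3) = ⊥ :=
      (Subgroup.map_eq_bot_iff _).mpr (le_of_eq (QuotientGroup.ker_mk' _).symm)
    exact le_bot_iff.mp (hmap ▸ lcs_le_map π (QuotientGroup.mk'_surjective _) 3)
  have hcent : ∀ g ∈ Subgroup.lowerCentralSeries (⊤ : Subgroup Q) 2, ∀ z : Q, g * z = z * g := by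
    intro g hg z
    have h4 : ⁅g, z⁆ ∈ Subgroup.lowerCentralSeries (⊤ : Subgroup Q) 3 :=
      Subgroup.commutator_mem_commutator hg (Subgroup.mem_top z)
    rw [hbot, Subgroup.mem_bot] at h4
    exact commutatorElement_eq_one_iff_mul_comm.mp h4
  set a : Q := π xg with ha0
  set b : Q := π yg with hb0
  set c : Q := a⁻¹ * b⁻¹ * a * b with hc0
  set d : Q := c⁻¹ * a⁻¹ * c * a with hd0
  set e : Q := c⁻¹ * b⁻¹ * c * b with he0
  -- memberships
  have hc1 : c ∈ Subgroup.lowerCentralSeries (⊤ : Subgroup Q) 1 := by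
    have h := Subgroup.commutator_mem_commutator (Subgroup.mem_top a⁻¹) (Subgroup.mem_top b⁻¹)
    have hce : c = ⁅a⁻¹, b⁻¹⁆ := by rw [hc0, commutatorElement_def, inv_inv, inv_inv]
    rw [hce]
    exact h
  have hd2 : d ∈ Subgroup.lowerCentralSeries (⊤ : Subgroup Q) 2 := by
    have hde : d = ⁅c⁻¹, a⁻¹⁆ := by rw [hd0, commutatorElement_def, inv_inv, inv_inv]
    rw [hde]
    exact Subgroup.commutator_mem_commutator (Subgroup.inv_mem _ hc1) (Subgroup.mem_top a⁻¹)
  have he2 : e ∈ Subgroup.lowerCentralSeries (⊤ : Subgroup Q) 2 := by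
    have hee : e = ⁅c⁻¹, b⁻¹⁆ := by rw [he0, commutatorElement_def, inv_inv, inv_inv]
    rw [hee]
    exact Subgroup.commutator_mem_commutator (Subgroup.inv_mem _ hc1) (Subgroup.mem_top b⁻¹)
  have hdz : ∀ z : Q, d * z = z * d := hcent d hd2
  have hez : ∀ z : Q, e * z = z * e := hcent e he2
  -- the relation in Q
  have hrel : a * b⁻¹ * a⁻¹ * b * a = b⁻¹ * b⁻¹ * a * b * a⁻¹ * b⁻¹ * a * b * b := by
    have h1 : (PresentedGroup.mk ({R} : Set F)) R = 1 :=
      (QuotientGroup.eq_one_iff R).mpr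
        (Subgroup.subset_normalClosure (Set.mem_singleton R))
    have h2 : π (PresentedGroup.mk ({R} : Set F) R) = 1 := by rw [h1, map_one]
    have h3 : (π.comp (PresentedGroup.mk ({R} : Set F)))
        ((x * y⁻¹ * x⁻¹ * y * x) * (y⁻¹ * y⁻¹ * x * y * x⁻¹ * y⁻¹ * x * y * y)⁻¹) = 1 := h2
    rw [map_mul, map_inv, mul_inv_eq_one] at h3
    simp only [map_mul, map_inv] at h3
    exact h3
  have hkey := key a b c d e hc0 hd0 he0 hdz hez hrel
  have hX : π (comm yg xg) = c⁻¹ := by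
    rw [hc0]
    simp only [comm, map_mul, map_inv]
    group
    rfl
  have hY : π (comm (comm xg yg) yg) = e := by
    rw [he0, hc0]
    simp only [comm, map_mul, map_inv]
    rfl
  rw [hX, hY]
  calc c⁻¹ ^ 4 = c⁻¹ * c⁻¹ * c⁻¹ * c⁻¹ := by group
  _ = e * e := hkey
  _ = e ^ 2 := (pow_two e).symm

end Stmt4
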